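/- (Noisy-label AUC risk.) Let p_P and p_N be probability measures on X, let η_P, η_N ∈ [0,1], and define the noisy class-conditional distributions p_P̃ = (1−η_P)·p_P + η_P·p_N and p_Ñ = η_N·p_P + (1−η_N)·p_N. Assume f : X → ℝ is measurable and the pushforward distributions of f under p_P and under p_N are atomless. Then the noisy 0–1 AUC risk satisfies R(f; p_P̃, p_Ñ) = ã·R_PN(f) + (1 − ã)/2, where ã = 1 − η_P − η_N. -/
import Mathlib


open MeasureTheory

/-- The AUC risk of score function `f` under the 0–1 loss, with positive distribution `μ`
and negative distribution `ν`: `R(f; μ, ν) = ∫∫ 𝟙[f(x) − f(x') < 0] dμ(x) dν(x')`. -/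
noncomputable def AUCRisk {X : Type*} [MeasurableSpace X] (f : X → ℝ)
    (μ ν : Measure X) : ℝ :=
  ∫ x, ∫ x', (if f x - f x' < 0 then (1 : ℝ) else 0) ∂ν ∂μ

section Aux

variable {X : Type*} [MeasurableSpace X] {f : X → ℝ}

private lemma auc_int_one (hf : Measurable f) (x : X) (ν : Measure X) [IsFiniteMeasure ν] :
    Integrable (fun x' => if f x - f x' < 0 then (1 : ℝ) else 0) ν := by
  have hs : MeasurableSet {x' : X | f x - f x' < 0} :=
    measurableSet_lt (measurable_const.sub hf) measurable_const
  have heq : (fun x' => if f x - f x' < 0 then (1 : ℝ) else 0)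
      = Set.indicator {x' : X | f x - f x' < 0} (fun _ => (1 : ℝ)) := by
    ext x'; simp [Set.indicator_apply]
  rw [heq]
  exact (integrable_const 1).indicator hs

private lemma auc_int_prod (hf : Measurable f) (μ ν : Measure X)
    [IsFiniteMeasure μ] [IsFiniteMeasure ν] :
    Integrable (fun p : X × X => if f p.1 - f p.2 < 0 then (1 : ℝ) else 0) (μ.prod ν) := by
  have hs : MeasurableSet {p : X × X | f p.1 - f p.2 < 0} :=
    measurableSet_lt ((hf.comp measurable_fst).sub (hf.comp measurable_snd)) measurable_const
  have heq : (fun p : X × X => if f p.1 - f p.2 < 0 then (1 : ℝ) else 0)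
      = Set.indicator {p : X × X | f p.1 - f p.2 < 0} (fun _ => (1 : ℝ)) := by
    ext p; simp [Set.indicator_apply]
  rw [heq]
  exact (integrable_const 1).indicator hs

/-- Integrability of the inner integral as a function of the outer variable. -/
private lemma auc_int_inner (hf : Measurable f) (μ ν : Measure X)
    [IsFiniteMeasure μ] [IsFiniteMeasure ν] :
    Integrable (fun x => ∫ x', (if f x - f x' < 0 then (1 : ℝ) else 0) ∂ν) μ := by
  have := (auc_int_prod hf μ ν).integral_prod_left
  exact this

/-- Linearity of AUCRisk in the second (negative) measure. -/
private lemma auc_smul_add_right (hf : Measurable f) (μ ν₁ ν₂ : Measure X)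
    [IsFiniteMeasure μ] [IsFiniteMeasure ν₁] [IsFiniteMeasure ν₂]
    (a b : ENNReal) (ha : a ≠ ⊤) (hb : b ≠ ⊤) :
    AUCRisk f μ (a • ν₁ + b • ν₂)
      = a.toReal * AUCRisk f μ ν₁ + b.toReal * AUCRisk f μ ν₂ := by
  unfold AUCRisk
  have hinner : ∀ x : X,
      ∫ x', (if f x - f x' < 0 then (1 : ℝ) else 0) ∂(a • ν₁ + b • ν₂)
        = a.toReal * ∫ x', (if f x - f x' < 0 then (1 : ℝ) else 0) ∂ν₁
          + b.toReal * ∫ x', (if f x - f x' < 0 then (1 : ℝ) else 0) ∂ν₂ := by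
    intro x
    rw [integral_add_measure ((auc_int_one hf x ν₁).smul_measure ha)
      ((auc_int_one hf x ν₂).smul_measure hb), integral_smul_measure, integral_smul_measure]
    simp [smul_eq_mul]
  calc ∫ x, ∫ x', (if f x - f x' < 0 then (1 : ℝ) else 0) ∂(a • ν₁ + b • ν₂) ∂μ
      = ∫ x, (a.toReal * ∫ x', (if f x - f x' < 0 then (1 : ℝ) else 0) ∂ν₁
          + b.toReal * ∫ x', (if f x - f x' < 0 then (1 : ℝ) else 0) ∂ν₂) ∂μ := by
        exact integral_congr_ae (Filter.Eventually.of_forall hinner)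
    _ = a.toReal * (∫ x, ∫ x', (if f x - f x' < 0 then (1 : ℝ) else 0) ∂ν₁ ∂μ)
          + b.toReal * (∫ x, ∫ x', (if f x - f x' < 0 then (1 : ℝ) else 0) ∂ν₂ ∂μ) := by
        rw [integral_add ((auc_int_inner hf μ ν₁).const_mul _)
          ((auc_int_inner hf μ ν₂).const_mul _), integral_const_mul, integral_const_mul]

/-- Linearity of AUCRisk in the first (positive) measure. -/
private lemma auc_smul_add_left (hf : Measurable f) (μ₁ μ₂ ν : Measure X)
    [IsFiniteMeasure μ₁] [IsFiniteMeasure μ₂] [IsFiniteMeasure ν]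
    (a b : ENNReal) (ha : a ≠ ⊤) (hb : b ≠ ⊤) :
    AUCRisk f (a • μ₁ + b • μ₂) ν
      = a.toReal * AUCRisk f μ₁ ν + b.toReal * AUCRisk f μ₂ ν := by
  unfold AUCRisk
  rw [integral_add_measure ((auc_int_inner hf μ₁ ν).smul_measure ha)
    ((auc_int_inner hf μ₂ ν).smul_measure hb), integral_smul_measure, integral_smul_measure]
  simp [smul_eq_mul]

/-- The key symmetry: if the pushforward of `f` under `ν` is atomless then
`R(f;μ,ν) + R(f;ν,μ) = 1`. -/
private lemma auc_key (hf : Measurable f) (μ ν : Measure X)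
    [IsProbabilityMeasure μ] [IsProbabilityMeasure ν]
    (hν : ∀ t : ℝ, ν {x | f x = t} = 0) :
    AUCRisk f μ ν + AUCRisk f ν μ = 1 := by
  have hswap : AUCRisk f ν μ
      = ∫ x, ∫ y, (if f y - f x < 0 then (1 : ℝ) else 0) ∂ν ∂μ := by
    unfold AUCRisk
    exact integral_integral_swap (auc_int_prod hf ν μ)
  rw [hswap]
  unfold AUCRisk
  have h1 : ∀ x : X, Integrable (fun y => if f y - f x < 0 then (1 : ℝ) else 0) ν := by
    intro x
    have hs : MeasurableSet {y : X | f y - f x < 0} :=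
      measurableSet_lt (hf.sub measurable_const) measurable_const
    have heq : (fun y => if f y - f x < 0 then (1 : ℝ) else 0)
        = Set.indicator {y : X | f y - f x < 0} (fun _ => (1 : ℝ)) := by
      ext y; simp [Set.indicator_apply]
    rw [heq]
    exact (integrable_const 1).indicator hs
  have hAdd : ∀ x : X,
      (∫ y, (if f x - f y < 0 then (1 : ℝ) else 0) ∂ν)
        + ∫ y, (if f y - f x < 0 then (1 : ℝ) else 0) ∂ν = 1 := by
    intro x
    rw [← integral_add (auc_int_one hf x ν) (h1 x)]
    have hae : ∀ᵐ y ∂ν, ((if f x - f y < 0 then (1 : ℝ) else 0)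
        + if f y - f x < 0 then (1 : ℝ) else 0) = 1 := by
      have hν' : ν {y | f y = f x} = 0 := hν (f x)
      filter_upwards [measure_eq_zero_iff_ae_notMem.mp hν'] with y hy
      rcases lt_trichotomy (f x) (f y) with h | h | h
      · rw [if_pos (by linarith), if_neg (by linarith)]; ring
      · exact absurd h.symm hy
      · rw [if_neg (by linarith), if_pos (by linarith)]; ring
    rw [integral_congr_ae hae]
    simp
  rw [← integral_add (auc_int_inner hf μ ν) (Integrable.integral_prod_right (auc_int_prod hf ν μ))]
  rw [integral_congr_ae (Filter.Eventually.of_forall hAdd)]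
  simp

private lemma auc_self (hf : Measurable f) (μ : Measure X) [IsProbabilityMeasure μ]
    (hμ : ∀ t : ℝ, μ {x | f x = t} = 0) :
    AUCRisk f μ μ = 1 / 2 := by
  have := auc_key hf μ μ hμ
  linarith

end Aux

/-- noisy-label AUC risk:
`R(f; p_P̃, p_Ñ) = ã·R_PN(f) + (1 − ã)/2` with `ã = 1 − η_P − η_N`. -/
theorem noisy_label_auc_risk {X : Type*} [MeasurableSpace X]
    (pP pN : Measure X) [IsProbabilityMeasure pP] [IsProbabilityMeasure pN]
    (ηP ηN : ℝ) (hηP : ηP ∈ Set.Icc (0 : ℝ) 1) (hηN : ηN ∈ Set.Icc (0 : ℝ) 1)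
    (f : X → ℝ) (hf : Measurable f)
    (hP : ∀ t : ℝ, pP {x | f x = t} = 0)
    (hN : ∀ t : ℝ, pN {x | f x = t} = 0)
    (pPt pNt : Measure X)
    (hpPt : pPt = ENNReal.ofReal (1 - ηP) • pP + ENNReal.ofReal ηP • pN)
    (hpNt : pNt = ENNReal.ofReal ηN • pP + ENNReal.ofReal (1 - ηN) • pN) :
    AUCRisk f pPt pNt
      = (1 - ηP - ηN) * AUCRisk f pP pN + (1 - (1 - ηP - ηN)) / 2 := by
  obtain ⟨hP0, hP1⟩ := hηP
  obtain ⟨hN0, hN1⟩ := hηN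
  subst hpPt hpNt
  have hfin : IsFiniteMeasure (ENNReal.ofReal ηN • pP + ENNReal.ofReal (1 - ηN) • pN) := by
    constructor
    rw [Measure.add_apply, Measure.smul_apply, Measure.smul_apply]
    simp only [smul_eq_mul, measure_univ, mul_one]
    exact ENNReal.add_lt_top.mpr ⟨ENNReal.ofReal_lt_top, ENNReal.ofReal_lt_top⟩
  rw [auc_smul_add_left hf pP pN _ _ _ ENNReal.ofReal_ne_top ENNReal.ofReal_ne_top,
    auc_smul_add_right hf pP pP pN _ _ ENNReal.ofReal_ne_top ENNReal.ofReal_ne_top,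
    auc_smul_add_right hf pN pP pN _ _ ENNReal.ofReal_ne_top ENNReal.ofReal_ne_top]
  rw [ENNReal.toReal_ofReal (by linarith), ENNReal.toReal_ofReal hP0,
    ENNReal.toReal_ofReal hN0, ENNReal.toReal_ofReal (by linarith)]
  have hPP : AUCRisk f pP pP = 1 / 2 := auc_self hf pP hP
  have hNN : AUCRisk f pN pN = 1 / 2 := auc_self hf pN hN
  have hNP : AUCRisk f pP pN + AUCRisk f pN pP = 1 := auc_key hf pP pN hN
  have hNPe : AUCRisk f pN pP = 1 - AUCRisk f pP pN := by linarith
  rw [hPP, hNN, hNPe]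
  ring
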